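/- Let μ be any probability measure on ℝ, let T be a random variable with law μ, and define the mid-p-value Q = g(T), where g(t) = (1/2)·μ([t,∞)) + (1/2)·μ((t,∞)). Then Q is sub-uniform. -/

import Mathlib

open MeasureTheory Set
open scoped ENNReal

/-- A real-valued random variable `X` on a probability space `(Ω, P)` is *sub-uniform*
if it is dominated in the convex order by the uniform distribution `U` on `[0,1]`:
`E[h(X)] ≤ E[h(U)]` for every convex `h : ℝ → ℝ` for which both expectations exist.
(The expectation `E[h(X)]` exists, with a value in `(-∞, ∞]`, precisely when the
negative part of `h ∘ X` is integrable; in that case the inequality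
`E[h(X)] ≤ E[h(U)] < ∞` forces `h ∘ X` to be integrable.  The expectation `E[h(U)]`
always exists, since a convex function on `ℝ` is continuous, hence bounded on `[0,1]`.) -/
def SubUniform {Ω : Type*} [MeasurableSpace Ω] (P : Measure Ω) (X : Ω → ℝ) : Prop :=
  ∀ h : ℝ → ℝ, ConvexOn ℝ Set.univ h →
    Integrable (fun ω => max (-(h (X ω))) 0) P →
    Integrable (fun ω => h (X ω)) P ∧
      ∫ ω, h (X ω) ∂P ≤ ∫ x in Set.Icc (0:ℝ) 1, h x ∂volume

namespace MidPAux

noncomputable def mpL : Measure ℝ := volume.restrict (Set.Icc (0:ℝ) 1)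

instance : IsProbabilityMeasure mpL :=
  ⟨by rw [mpL, Measure.restrict_apply_univ, Real.volume_Icc]; norm_num⟩

noncomputable def mpA (μ : Measure ℝ) (t : ℝ) : ℝ := (μ (Ici t)).toReal

noncomputable def mpB (μ : Measure ℝ) (t : ℝ) : ℝ := (μ (Ioi t)).toReal

noncomputable def mpP (μ : Measure ℝ) (q : ℝ × ℝ) : ℝ :=
  mpB μ q.1 + q.2 * (mpA μ q.1 - mpB μ q.1)

variable (μ : Measure ℝ) [IsProbabilityMeasure μ]

lemma mpA_antitone : Antitone (mpA μ) := fun s t hst =>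
  ENNReal.toReal_mono (measure_ne_top _ _) (measure_mono (Ici_subset_Ici.2 hst))

lemma mpB_antitone : Antitone (mpB μ) := fun s t hst =>
  ENNReal.toReal_mono (measure_ne_top _ _) (measure_mono (Ioi_subset_Ioi hst))

lemma mpA_measurable : Measurable (mpA μ) := (mpA_antitone μ).measurable

lemma mpB_measurable : Measurable (mpB μ) := (mpB_antitone μ).measurable

lemma mpP_measurable : Measurable (mpP μ) := by
  unfold mpP
  exact ((mpB_measurable μ).comp measurable_fst).add
    (measurable_snd.mul (((mpA_measurable μ).comp measurable_fst).sub
      ((mpB_measurable μ).comp measurable_fst)))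

lemma mpB_nonneg (t : ℝ) : 0 ≤ mpB μ t := ENNReal.toReal_nonneg

lemma mpB_le_mpA (t : ℝ) : mpB μ t ≤ mpA μ t :=
  ENNReal.toReal_mono (measure_ne_top _ _) (measure_mono Ioi_subset_Ici_self)

lemma mpA_le_one (t : ℝ) : mpA μ t ≤ 1 := by
  have : (μ (Ici t)).toReal ≤ (μ univ).toReal :=
    ENNReal.toReal_mono (measure_ne_top _ _) (measure_mono (subset_univ _))
  simpa [mpA, measure_univ] using this

lemma mpA_eq (t : ℝ) : μ (Ici t) = ENNReal.ofReal (mpA μ t) :=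
  (ENNReal.ofReal_toReal (measure_ne_top _ _)).symm

lemma mpB_eq (t : ℝ) : μ (Ioi t) = ENNReal.ofReal (mpB μ t) :=
  (ENNReal.ofReal_toReal (measure_ne_top _ _)).symm

lemma mpP_mem_Icc {t v : ℝ} (hv : v ∈ Icc (0:ℝ) 1) : mpP μ (t, v) ∈ Icc (0:ℝ) 1 := by
  obtain ⟨hv0, hv1⟩ := hv
  have hb0 := mpB_nonneg μ t
  have hba := mpB_le_mpA μ t
  have ha1 := mpA_le_one μ t
  have h1 : v * (mpA μ t - mpB μ t) ≤ 1 * (mpA μ t - mpB μ t) :=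
    mul_le_mul_of_nonneg_right hv1 (by linarith)
  constructor
  · have : 0 ≤ v * (mpA μ t - mpB μ t) := mul_nonneg hv0 (by linarith)
    simp only [mpP]; linarith
  · simp only [mpP]; linarith

lemma fiber_measurable (t u : ℝ) : MeasurableSet {v : ℝ | mpP μ (t, v) ≤ u} :=
  measurableSet_le ((mpP_measurable μ).comp measurable_prodMk_left) measurable_const

lemma fiber_ge {t u : ℝ} (h : mpA μ t ≤ u) : mpL {v : ℝ | mpP μ (t, v) ≤ u} = 1 := by
  rw [mpL, Measure.restrict_apply (fiber_measurable μ t u)]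
  have hsub : Icc (0:ℝ) 1 ⊆ {v : ℝ | mpP μ (t, v) ≤ u} := by
    intro v hv
    have hba := mpB_le_mpA μ t
    have h1 : v * (mpA μ t - mpB μ t) ≤ 1 * (mpA μ t - mpB μ t) :=
      mul_le_mul_of_nonneg_right hv.2 (by linarith)
    simp only [mem_setOf_eq, mpP]; linarith
  rw [inter_eq_self_of_subset_right hsub, Real.volume_Icc]; norm_num

lemma fiber_lt {t u : ℝ} (h : u < mpB μ t) : mpL {v : ℝ | mpP μ (t, v) ≤ u} = 0 := by
  rw [mpL, Measure.restrict_apply (fiber_measurable μ t u)]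
  have hsub : {v : ℝ | mpP μ (t, v) ≤ u} ∩ Icc (0:ℝ) 1 = ∅ := by
    ext v
    simp only [mem_inter_iff, mem_setOf_eq, mem_empty_iff_false, iff_false, not_and, mpP]
    intro hp hv
    have hba := mpB_le_mpA μ t
    have : 0 ≤ v * (mpA μ t - mpB μ t) := mul_nonneg hv.1 (by linarith)
    linarith
  rw [hsub]; exact measure_empty

lemma fiber_mid {t u : ℝ} (hb : mpB μ t ≤ u) (ha : u ≤ mpA μ t) (hd : mpB μ t < mpA μ t) :
    mpL {v : ℝ | mpP μ (t, v) ≤ u}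
      = ENNReal.ofReal ((u - mpB μ t) / (mpA μ t - mpB μ t)) := by
  set a := mpA μ t
  set b := mpB μ t
  have hdpos : 0 < a - b := by linarith
  set r : ℝ := (u - b) / (a - b) with hr
  have hr1 : r ≤ 1 := by
    rw [hr, div_le_one hdpos]; linarith
  have hset : {v : ℝ | mpP μ (t, v) ≤ u} = Iic r := by
    ext v
    simp only [mem_setOf_eq, mem_Iic, mpP, hr]
    rw [le_div_iff₀ hdpos]
    constructor <;> intro h <;> linarith
  rw [mpL, Measure.restrict_apply (fiber_measurable μ t u), hset]
  have : Iic r ∩ Icc (0:ℝ) 1 = Icc 0 r := by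
    ext v
    simp only [mem_inter_iff, mem_Iic, mem_Icc]
    constructor
    · rintro ⟨h1, h2, h3⟩; exact ⟨h2, h1⟩
    · rintro ⟨h1, h2⟩; exact ⟨h2, h1, h2.trans hr1⟩
  rw [this, Real.volume_Icc, sub_zero]

lemma key_mid {u : ℝ} (hu0 : 0 < u) (hu1 : u < 1) :
    ∫⁻ t, mpL {v : ℝ | mpP μ (t, v) ≤ u} ∂μ = ENNReal.ofReal u := by
  set A := {t : ℝ | mpA μ t ≤ u} with hA
  -- A is nonempty
  have hAne : A.Nonempty := by
    have h2 : ⋂ n : ℕ, Ici ((n : ℝ)) = ∅ := by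
      apply eq_empty_iff_forall_notMem.2
      intro x hx
      obtain ⟨n, hn⟩ := exists_nat_gt x
      have := mem_iInter.1 hx n
      simp only [mem_Ici] at this
      linarith
    have h1 : Filter.Tendsto (fun n : ℕ => μ (Ici ((n : ℝ)))) Filter.atTop (nhds 0) := by
      have := tendsto_measure_iInter_atTop (μ := μ)
        (fun n : ℕ => measurableSet_Ici.nullMeasurableSet)
        (fun m n hmn => Ici_subset_Ici.2 (Nat.cast_le.2 hmn)) ⟨0, measure_ne_top _ _⟩
      rw [h2, measure_empty] at this
      exact this
    have h3 : ∀ᶠ n : ℕ in Filter.atTop, μ (Ici ((n : ℝ))) < ENNReal.ofReal u :=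
      h1.eventually_lt_const (ENNReal.ofReal_pos.2 hu0)
    obtain ⟨n, hn⟩ := h3.exists
    exact ⟨(n : ℝ), ENNReal.toReal_le_of_le_ofReal hu0.le hn.le⟩
  -- A is bounded below
  have hAbdd : BddBelow A := by
    have h2 : ⋃ n : ℕ, Ici (-(n : ℝ)) = univ := by
      apply eq_univ_of_forall
      intro x
      obtain ⟨n, hn⟩ := exists_nat_gt (-x)
      exact mem_iUnion.2 ⟨n, by simp only [mem_Ici]; linarith⟩
    have h1 : Filter.Tendsto (fun n : ℕ => μ (Ici (-(n : ℝ)))) Filter.atTop (nhds 1) := by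
      have := tendsto_measure_iUnion_atTop (μ := μ)
        (s := fun n : ℕ => Ici (-(n : ℝ)))
        (fun m n hmn => Ici_subset_Ici.2 (neg_le_neg (Nat.cast_le.2 hmn)))
      rw [h2, measure_univ] at this
      exact this
    have h3 : ∀ᶠ n : ℕ in Filter.atTop, ENNReal.ofReal u < μ (Ici (-(n : ℝ))) :=
      h1.eventually_const_lt (ENNReal.ofReal_lt_one.2 hu1)
    obtain ⟨n, hn⟩ := h3.exists
    refine ⟨-(n : ℝ), fun t ht => ?_⟩
    by_contra hcon
    push_neg at hcon
    have h4 : mpA μ (-(n:ℝ)) ≤ mpA μ t := mpA_antitone μ hcon.le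
    have h5 : u < mpA μ (-(n:ℝ)) :=
      (ENNReal.ofReal_lt_iff_lt_toReal hu0.le (measure_ne_top μ _)).1 hn
    have h6 : mpA μ t ≤ u := ht
    linarith
  set τ : ℝ := sInf A with hτ
  -- basic facts about τ
  have hlt_notmem : ∀ t, t < τ → u < mpA μ t := by
    intro t ht
    by_contra hcon
    push_neg at hcon
    exact absurd (csInf_le hAbdd hcon) (not_le.2 ht)
  have hgt_mem : ∀ t, τ < t → mpA μ t ≤ u := by
    intro t ht
    obtain ⟨s, hsA, hst⟩ := (csInf_lt_iff hAbdd hAne).1 ht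
    exact le_trans (mpA_antitone μ hst.le) hsA
  have hblt : ∀ t, t < τ → u < mpB μ t := by
    intro t ht
    have hmid : t < (t + τ) / 2 := by linarith
    have hmid2 : (t + τ) / 2 < τ := by linarith
    have h1 : u < mpA μ ((t + τ) / 2) := hlt_notmem _ hmid2
    have h2 : mpA μ ((t + τ) / 2) ≤ mpB μ t :=
      ENNReal.toReal_mono (measure_ne_top _ _)
        (measure_mono (fun x hx => lt_of_lt_of_le hmid hx))
    linarith
  have hbτ : mpB μ τ ≤ u := by
    have hIoi : Ioi τ = ⋃ n : ℕ, Ici (τ + 1 / ((n : ℝ) + 1)) := by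
      ext x
      simp only [mem_Ioi, mem_iUnion, mem_Ici]
      constructor
      · intro hx
        obtain ⟨n, hn⟩ := exists_nat_one_div_lt (sub_pos.2 hx)
        exact ⟨n, by linarith⟩
      · rintro ⟨n, hn⟩
        have : 0 < 1 / ((n : ℝ) + 1) := by positivity
        linarith
    have hmono : Monotone (fun n : ℕ => Ici (τ + 1 / ((n : ℝ) + 1))) := by
      intro m n hmn
      apply Ici_subset_Ici.2
      have : (1 : ℝ) / ((n : ℝ) + 1) ≤ 1 / ((m : ℝ) + 1) := by
        apply one_div_le_one_div_of_le (by positivity)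
        exact_mod_cast Nat.succ_le_succ hmn
      linarith
    have h1 : Filter.Tendsto (fun n : ℕ => μ (Ici (τ + 1 / ((n : ℝ) + 1)))) Filter.atTop
        (nhds (μ (Ioi τ))) := by
      have := tendsto_measure_iUnion_atTop (μ := μ) hmono
      rwa [← hIoi] at this
    have h2 : μ (Ioi τ) ≤ ENNReal.ofReal u := by
      refine le_of_tendsto h1 (Filter.Eventually.of_forall fun n => ?_)
      have hτlt : τ < τ + 1 / ((n : ℝ) + 1) := by
        have : 0 < 1 / ((n : ℝ) + 1) := by positivity
        linarith
      have := hgt_mem _ hτlt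
      calc μ (Ici (τ + 1 / ((n : ℝ) + 1))) = ENNReal.ofReal (mpA μ (τ + 1 / ((n:ℝ)+1))) :=
            mpA_eq μ _
        _ ≤ ENNReal.ofReal u := ENNReal.ofReal_le_ofReal this
    exact ENNReal.toReal_le_of_le_ofReal hu0.le h2
  have haτ : u ≤ mpA μ τ := by
    have hIci : Ici τ = ⋂ n : ℕ, Ici (τ - 1 / ((n : ℝ) + 1)) := by
      ext x
      simp only [mem_Ici, mem_iInter]
      constructor
      · intro hx n
        have : 0 < 1 / ((n : ℝ) + 1) := by positivity
        linarith
      · intro hx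
        by_contra hcon
        push_neg at hcon
        obtain ⟨n, hn⟩ := exists_nat_one_div_lt (sub_pos.2 hcon)
        have := hx n
        linarith
    have hanti : Antitone (fun n : ℕ => Ici (τ - 1 / ((n : ℝ) + 1))) := by
      intro m n hmn
      apply Ici_subset_Ici.2
      have : (1 : ℝ) / ((n : ℝ) + 1) ≤ 1 / ((m : ℝ) + 1) := by
        apply one_div_le_one_div_of_le (by positivity)
        exact_mod_cast Nat.succ_le_succ hmn
      linarith
    have h1 : Filter.Tendsto (fun n : ℕ => μ (Ici (τ - 1 / ((n : ℝ) + 1)))) Filter.atTop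
        (nhds (μ (Ici τ))) := by
      have := tendsto_measure_iInter_atTop (μ := μ)
        (fun n : ℕ => measurableSet_Ici.nullMeasurableSet) hanti ⟨0, measure_ne_top _ _⟩
      rwa [← hIci] at this
    have h2 : ENNReal.ofReal u ≤ μ (Ici τ) := by
      refine ge_of_tendsto h1 (Filter.Eventually.of_forall fun n => ?_)
      have hτlt : τ - 1 / ((n : ℝ) + 1) < τ := by
        have : 0 < 1 / ((n : ℝ) + 1) := by positivity
        linarith
      have := (hlt_notmem _ hτlt).le
      calc ENNReal.ofReal u ≤ ENNReal.ofReal (mpA μ (τ - 1 / ((n:ℝ)+1))) :=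
            ENNReal.ofReal_le_ofReal this
        _ = μ (Ici (τ - 1 / ((n : ℝ) + 1))) := (mpA_eq μ _).symm
    have := ENNReal.toReal_mono (measure_ne_top μ _) h2
    rwa [ENNReal.toReal_ofReal hu0.le] at this
  -- split the integral
  set F : ℝ → ℝ≥0∞ := fun t => mpL {v : ℝ | mpP μ (t, v) ≤ u} with hF
  have hsplit : ∫⁻ t, F t ∂μ
      = (∫⁻ t in Iio τ, F t ∂μ) + ((∫⁻ t in {τ}, F t ∂μ) + (∫⁻ t in Ioi τ, F t ∂μ)) := by
    rw [← lintegral_add_compl F measurableSet_Iio (μ := μ), compl_Iio]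
    congr 1
    have : Ici τ = {τ} ∪ Ioi τ := by
      rw [union_comm, Ioi_union_left]
    rw [this, lintegral_union measurableSet_Ioi (by simp)]
  have hIio : ∫⁻ t in Iio τ, F t ∂μ = 0 := by
    rw [setLIntegral_congr_fun measurableSet_Iio
      (fun t (ht : t < τ) => fiber_lt μ (hblt t ht))]
    simp
  have hIoi : ∫⁻ t in Ioi τ, F t ∂μ = μ (Ioi τ) := by
    rw [setLIntegral_congr_fun measurableSet_Ioi
      (fun t (ht : τ < t) => fiber_ge μ (hgt_mem t ht))]
    exact setLIntegral_one _
  have hsing : ∫⁻ t in {τ}, F t ∂μ = F τ * μ {τ} := lintegral_singleton _ _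
  have hIci_split : μ (Ici τ) = μ {τ} + μ (Ioi τ) := by
    have : Ici τ = {τ} ∪ Ioi τ := by rw [union_comm, Ioi_union_left]
    rw [this, measure_union (by simp) measurableSet_Ioi]
  have hμτ : μ {τ} = ENNReal.ofReal (mpA μ τ - mpB μ τ) := by
    have h1 : (μ {τ}).toReal = mpA μ τ - mpB μ τ := by
      have h2 : (μ (Ici τ)).toReal = (μ {τ}).toReal + (μ (Ioi τ)).toReal := by
        rw [hIci_split, ENNReal.toReal_add (measure_ne_top _ _) (measure_ne_top _ _)]
      simp only [mpA, mpB]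
      linarith
    rw [← h1, ENNReal.ofReal_toReal (measure_ne_top _ _)]
  rw [hsplit, hIio, hsing, hIoi, zero_add]
  rcases eq_or_lt_of_le (mpB_le_mpA μ τ) with heq | hd
  · -- no atom at τ
    have hμτ0 : μ {τ} = 0 := by rw [hμτ, ← heq, sub_self, ENNReal.ofReal_zero]
    have hub : u = mpB μ τ := le_antisymm (by rw [heq]; exact haτ) hbτ
    rw [hμτ0, mul_zero, zero_add, mpB_eq μ, ← hub]
  · -- atom at τ
    simp only [hF]
    rw [fiber_mid μ hbτ haτ hd, hμτ, mpB_eq μ,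
      ← ENNReal.ofReal_mul (div_nonneg (by linarith) (by linarith)),
      div_mul_cancel₀ _ (by linarith : mpA μ τ - mpB μ τ ≠ 0),
      ← ENNReal.ofReal_add (by linarith) (mpB_nonneg μ τ)]
    ring_nf

lemma key_top {u : ℝ} (hu : 1 ≤ u) :
    ∫⁻ t, mpL {v : ℝ | mpP μ (t, v) ≤ u} ∂μ = 1 := by
  have : ∀ t : ℝ, mpL {v : ℝ | mpP μ (t, v) ≤ u} = 1 := fun t =>
    fiber_ge μ ((mpA_le_one μ t).trans hu)
  simp only [this, lintegral_one, measure_univ]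

lemma mpL_Iic {u : ℝ} (hu0 : 0 < u) (hu1 : u ≤ 1) : mpL (Iic u) = ENNReal.ofReal u := by
  rw [mpL, Measure.restrict_apply measurableSet_Iic]
  have : Iic u ∩ Icc (0:ℝ) 1 = Icc 0 u := by
    ext v
    simp only [mem_inter_iff, mem_Iic, mem_Icc]
    exact ⟨fun ⟨h1, h2, h3⟩ => ⟨h2, h1⟩, fun ⟨h1, h2⟩ => ⟨h2, h1, h2.trans hu1⟩⟩
  rw [this, Real.volume_Icc, sub_zero]

lemma key : (μ.prod mpL).map (mpP μ) = mpL := by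
  have happ : ∀ u : ℝ, ((μ.prod mpL).map (mpP μ)) (Iic u)
      = ∫⁻ t, mpL {v : ℝ | mpP μ (t, v) ≤ u} ∂μ := by
    intro u
    rw [Measure.map_apply (mpP_measurable μ) measurableSet_Iic,
      Measure.prod_apply ((mpP_measurable μ) measurableSet_Iic)]
    rfl
  have hmid : ∀ u : ℝ, 0 < u → u < 1 →
      ((μ.prod mpL).map (mpP μ)) (Iic u) = ENNReal.ofReal u := fun u h1 h2 => by
    rw [happ u, key_mid μ h1 h2]
  refine Measure.ext_of_Iic _ _ (fun u => ?_)
  rcases le_or_gt u 0 with hu0 | hu0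
  · -- squeeze
    have hzero : ((μ.prod mpL).map (mpP μ)) (Iic u) = 0 := by
      have hle : ∀ n : ℕ, 1 ≤ n → ((μ.prod mpL).map (mpP μ)) (Iic u)
          ≤ ENNReal.ofReal (1 / ((n : ℝ) + 1)) := by
        intro n hn
        have h1 : (0:ℝ) < 1 / ((n : ℝ) + 1) := by positivity
        have h2 : 1 / ((n : ℝ) + 1) < 1 := by
          rw [div_lt_one (by positivity)]
          have : (1:ℝ) ≤ (n : ℝ) := by exact_mod_cast hn
          linarith
        rw [← hmid _ h1 h2]
        exact measure_mono (Iic_subset_Iic.2 (by linarith))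
      have htend : Filter.Tendsto (fun n : ℕ => ENNReal.ofReal (1 / ((n : ℝ) + 1)))
          Filter.atTop (nhds 0) := by
        have := ENNReal.tendsto_ofReal (a := 0) tendsto_one_div_add_atTop_nhds_zero_nat
        simpa using this
      have := ge_of_tendsto htend
        (Filter.eventually_atTop.2 ⟨1, fun n hn => hle n hn⟩)
      exact le_antisymm this zero_le
    rw [hzero]
    symm
    rw [mpL, Measure.restrict_apply measurableSet_Iic]
    refine le_antisymm ?_ zero_le
    have hsub : Iic u ∩ Icc (0:ℝ) 1 ⊆ Icc 0 u := fun x ⟨h1, h2, _⟩ => ⟨h2, h1⟩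
    calc volume (Iic u ∩ Icc (0:ℝ) 1) ≤ volume (Icc (0:ℝ) u) := measure_mono hsub
      _ = ENNReal.ofReal (u - 0) := Real.volume_Icc
      _ = 0 := by rw [sub_zero, ENNReal.ofReal_eq_zero.2 hu0]
  · rcases lt_or_ge u 1 with hu1 | hu1
    · rw [hmid u hu0 hu1, mpL_Iic hu0 hu1.le]
    · rw [happ u, key_top μ hu1]
      symm
      have hss : Icc (0:ℝ) 1 ⊆ Iic u := fun x hx => mem_Iic.2 (hx.2.trans hu1)
      rw [mpL, Measure.restrict_apply measurableSet_Iic,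
        inter_eq_self_of_subset_right hss, Real.volume_Icc]
      norm_num

lemma mean_fiber (t : ℝ) : ∫ v, mpP μ (t, v) ∂mpL = (mpA μ t + mpB μ t) / 2 := by
  have hIv : ∫ v, v ∂mpL = 1 / 2 := by
    show (∫ v in Icc (0:ℝ) 1, v ∂volume) = 1 / 2
    rw [MeasureTheory.integral_Icc_eq_integral_Ioc, ← intervalIntegral.integral_of_le zero_le_one,
      integral_id]
    norm_num
  have hint : Integrable (fun v : ℝ => v * (mpA μ t - mpB μ t)) mpL := by
    show IntegrableOn (fun v : ℝ => v * (mpA μ t - mpB μ t)) (Icc 0 1) volume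
    exact (continuous_id.mul continuous_const).integrableOn_Icc
  have : ∫ v, mpP μ (t, v) ∂mpL
      = ∫ v, (mpB μ t + v * (mpA μ t - mpB μ t)) ∂mpL := rfl
  rw [this, integral_add (integrable_const _) hint, integral_const, probReal_univ,
    integral_mul_const, hIv]
  simp
  ring

end MidPAux

set_option maxHeartbeats 800000 in
theorem midP_subUniform {Ω : Type*} [MeasurableSpace Ω] (P : Measure Ω)
    [IsProbabilityMeasure P] (μ : Measure ℝ) [IsProbabilityMeasure μ]
    (T : Ω → ℝ) (hT : Measurable T) (hlaw : P.map T = μ)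
    (g : ℝ → ℝ)
    (hg : ∀ t, g t = (1/2) * (μ (Set.Ici t)).toReal + (1/2) * (μ (Set.Ioi t)).toReal) :
    SubUniform P (fun ω => g (T ω)) := by
  classical
  intro h hcvx _
  have hgA : ∀ t, g t = (MidPAux.mpA μ t + MidPAux.mpB μ t) / 2 := by
    intro t
    rw [hg t]
    show _ = ((μ (Ici t)).toReal + (μ (Ioi t)).toReal) / 2
    ring
  have hgmeas : Measurable g := by
    have : g = fun t => (MidPAux.mpA μ t + MidPAux.mpB μ t) / 2 := funext hgA
    rw [this]
    exact ((MidPAux.mpA_measurable μ).add (MidPAux.mpB_measurable μ)).div_const 2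
  have hcont : Continuous h :=
    continuousOn_univ.mp (hcvx.continuousOn isOpen_univ)
  obtain ⟨C, hC⟩ := (isCompact_Icc : IsCompact (Icc (0:ℝ) 1)).exists_bound_of_continuousOn
    hcont.continuousOn
  have hgIcc : ∀ t, g t ∈ Icc (0:ℝ) 1 := by
    intro t
    have h1 := MidPAux.mpB_nonneg μ t
    have h2 := MidPAux.mpB_le_mpA μ t
    have h3 := MidPAux.mpA_le_one μ t
    rw [hgA t, Set.mem_Icc]
    constructor <;> linarith
  -- integrability of h ∘ g ∘ T
  have hint1 : Integrable (fun ω => h (g (T ω))) P := by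
    refine Integrable.mono' (integrable_const C)
      (((hcont.measurable.comp hgmeas).comp hT).aestronglyMeasurable) ?_
    exact Filter.Eventually.of_forall fun ω => hC _ (hgIcc (T ω))
  refine ⟨hint1, ?_⟩
  -- transfer to μ
  have hmap : ∫ ω, h (g (T ω)) ∂P = ∫ t, h (g t) ∂μ := by
    rw [← hlaw, integral_map hT.aemeasurable]
    exact (hcont.measurable.comp hgmeas).aestronglyMeasurable
  -- integrability on the product space
  have hPmeas : Measurable (fun z : ℝ × ℝ => h (MidPAux.mpP μ z)) :=
    hcont.measurable.comp (MidPAux.mpP_measurable μ)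
  have haeIcc : ∀ᵐ z : ℝ × ℝ ∂(μ.prod MidPAux.mpL), z.2 ∈ Icc (0:ℝ) 1 := by
    have hset : {z : ℝ × ℝ | z.2 ∈ Icc (0:ℝ) 1} = univ ×ˢ Icc (0:ℝ) 1 := by
      ext z; simp [mem_prod]
    rw [ae_iff]
    have : {z : ℝ × ℝ | ¬ z.2 ∈ Icc (0:ℝ) 1} = univ ×ˢ (Icc (0:ℝ) 1)ᶜ := by
      ext z; simp [mem_prod]
    rw [this, Measure.prod_prod, measure_univ, one_mul]
    show MidPAux.mpL (Icc (0:ℝ) 1)ᶜ = 0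
    rw [MidPAux.mpL, Measure.restrict_apply (measurableSet_Icc.compl)]
    simp
  have hPint : Integrable (fun z : ℝ × ℝ => h (MidPAux.mpP μ z)) (μ.prod MidPAux.mpL) := by
    refine Integrable.mono' (integrable_const C) hPmeas.aestronglyMeasurable ?_
    refine haeIcc.mono fun z hz => ?_
    exact hC _ (MidPAux.mpP_mem_Icc μ hz)
  -- Jensen on each fiber
  have hjensen : ∀ t, h (g t) ≤ ∫ v, h (MidPAux.mpP μ (t, v)) ∂MidPAux.mpL := by
    intro t
    have hmean : ∫ v, MidPAux.mpP μ (t, v) ∂MidPAux.mpL = g t := by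
      rw [MidPAux.mean_fiber μ t, hgA t]
    have hcontP : Continuous (fun v : ℝ => MidPAux.mpP μ (t, v)) := by
      show Continuous (fun v : ℝ => MidPAux.mpB μ t + v * (MidPAux.mpA μ t - MidPAux.mpB μ t))
      fun_prop
    have hfi : Integrable (fun v : ℝ => MidPAux.mpP μ (t, v)) MidPAux.mpL := by
      rw [MidPAux.mpL]
      exact hcontP.integrableOn_Icc
    have hgi : Integrable ((fun x => h x) ∘ (fun v : ℝ => MidPAux.mpP μ (t, v)))
        MidPAux.mpL := by
      rw [MidPAux.mpL]
      exact (hcont.comp hcontP).integrableOn_Icc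
    rw [← hmean]
    exact hcvx.map_integral_le hcont.continuousOn isClosed_univ
      (Filter.Eventually.of_forall fun v => mem_univ _) hfi hgi
  -- integrability of the fiber integrals
  have hint2 : Integrable (fun t => h (g t)) μ := by
    refine Integrable.mono' (integrable_const C)
      ((hcont.measurable.comp hgmeas).aestronglyMeasurable) ?_
    exact Filter.Eventually.of_forall fun t => hC _ (hgIcc t)
  have hint3 : Integrable (fun t => ∫ v, h (MidPAux.mpP μ (t, v)) ∂MidPAux.mpL) μ :=
    hPint.integral_prod_left
  calc ∫ ω, h (g (T ω)) ∂P = ∫ t, h (g t) ∂μ := hmap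
    _ ≤ ∫ t, (∫ v, h (MidPAux.mpP μ (t, v)) ∂MidPAux.mpL) ∂μ :=
        integral_mono hint2 hint3 fun t => hjensen t
    _ = ∫ z, h (MidPAux.mpP μ z) ∂(μ.prod MidPAux.mpL) := (integral_prod _ hPint).symm
    _ = ∫ x, h x ∂((μ.prod MidPAux.mpL).map (MidPAux.mpP μ)) :=
        (integral_map (MidPAux.mpP_measurable μ).aemeasurable
          hcont.aestronglyMeasurable).symm
    _ = ∫ x, h x ∂MidPAux.mpL := by rw [MidPAux.key μ]
    _ = ∫ x in Set.Icc (0:ℝ) 1, h x ∂volume := rfl
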